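/- Let A, B, C ∈ ℂ^{n×n}, Z = [[0, B],[A, -C]], and suppose the spectrum of A^⋆ - λB is ⋆-reciprocal free with B invertible. Suppose U, V ∈ ℂ^{n×n} and T ∈ ℂ^{n×n} satisfy Z^⋆ [U; V] = Z [U; V] T, where [U; V] has full column rank and σ(T) = σ(A^⋆ - λB) (in particular σ(T) ∩ σ(B^⋆ - λA) = ∅). Then V is invertible and X = U V⁻¹ is the unique solution of A X + X^⋆ B = C. -/

import Mathlib

open Matrix

/-- `σ(Aᴴ - λB)` (with `∞` when `det B = 0`) is ⋆-reciprocal free. -/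
def StarReciprocalFree {n : ℕ} (A B : Matrix (Fin n) (Fin n) ℂ) : Prop :=
  (∀ μ ν : ℂ, (Aᴴ - μ • B).det = 0 → (Aᴴ - ν • B).det = 0 →
      μ * (starRingEnd ℂ ν) ≠ 1) ∧
  ¬((Aᴴ).det = 0 ∧ B.det = 0)

section Aux
open Polynomial

variable {m : ℕ}


lemma spec_det (M : Matrix (Fin m) (Fin m) ℂ) (μ : ℂ) :
    μ ∈ spectrum ℂ M ↔ (μ • (1 : Matrix (Fin m) (Fin m) ℂ) - M).det = 0 := by
  rw [spectrum.mem_iff, Matrix.isUnit_iff_isUnit_det, isUnit_iff_ne_zero, not_not,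
    Algebra.algebraMap_eq_smul_one]

lemma charpoly_eval_eq (M : Matrix (Fin m) (Fin m) ℂ) (μ : ℂ) :
    M.charpoly.eval μ = (μ • (1 : Matrix (Fin m) (Fin m) ℂ) - M).det := by
  rw [Matrix.charpoly, _root_.eval_det, Matrix.matPolyEquiv_charmatrix]
  simp [Matrix.scalar, Matrix.smul_one_eq_diagonal, Pi.algebraMap_def, Algebra.algebraMap_self_apply]

lemma spec_nonempty (hm : 0 < m) (P : Matrix (Fin m) (Fin m) ℂ) :
    (spectrum ℂ P).Nonempty := by
  have hmono := P.charpoly_monic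
  have hdeg : P.charpoly.natDegree = m := by
    simpa using P.charpoly_natDegree_eq_dim
  obtain ⟨α, hα⟩ := Complex.exists_root (f := P.charpoly) (by
    rw [degree_eq_natDegree hmono.ne_zero, hdeg]
    exact_mod_cast hm)
  exact ⟨α, (spec_det P α).mpr (by rw [← charpoly_eval_eq]; exact hα)⟩

lemma stein_zero (hm : 0 < m) (P M D : Matrix (Fin m) (Fin m) ℂ)
    (hspec : ∀ α ∈ spectrum ℂ P, ∀ β ∈ spectrum ℂ M, α * β ≠ 1)
    (hD : D = P * D * M) : D = 0 := by
  set p := M.charpoly with hp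
  have hdeg : p.natDegree = m := by rw [hp, M.charpoly_natDegree_eq_dim, Fintype.card_fin]
  set q : ℂ[X] := ∑ j ∈ Finset.range (m + 1), Polynomial.C (p.coeff j) * X ^ (m - j) with hq
  -- iterated relation
  have hiter : ∀ k, P ^ k * D * M ^ k = D := by
    intro k
    induction k with
    | zero => simp
    | succ k ih =>
      calc P ^ (k+1) * D * M ^ (k+1) = P ^ k * (P * D * M) * M ^ k := by
            rw [pow_succ, pow_succ']; simp only [mul_assoc]
      _ = D := by rw [← hD]; exact ih
  -- q(P) * D = P^m * D * p(M) = 0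
  have key : (aeval P q) * D = 0 := by
    have h1 : (aeval P q) * D = ∑ j ∈ Finset.range (m + 1), p.coeff j • (P ^ (m - j) * D) := by
      rw [hq, map_sum, Finset.sum_mul]
      refine Finset.sum_congr rfl fun j _ => ?_
      rw [_root_.map_mul, aeval_C, aeval_X_pow, Algebra.algebraMap_eq_smul_one, smul_mul_assoc,
        one_mul, smul_mul_assoc]
    have h2 : ∀ j ∈ Finset.range (m + 1), p.coeff j • (P ^ (m - j) * D)
        = p.coeff j • (P ^ m * D * M ^ j) := by
      intro j hj
      have hjm : j ≤ m := Nat.lt_succ_iff.mp (Finset.mem_range.mp hj)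
      congr 1
      calc P ^ (m - j) * D = P ^ (m - j) * (P ^ j * D * M ^ j) := by rw [hiter j]
      _ = P ^ m * D * M ^ j := by
            rw [← mul_assoc, ← mul_assoc, ← pow_add, Nat.sub_add_cancel hjm]
    rw [h1, Finset.sum_congr rfl h2]
    have h3 : ∑ j ∈ Finset.range (m + 1), p.coeff j • (P ^ m * D * M ^ j)
        = P ^ m * D * (aeval M p) := by
      rw [aeval_eq_sum_range' (n := m + 1) (by omega), Finset.mul_sum]
      congr 1; ext j
      rw [mul_smul_comm]
    rw [h3, Matrix.aeval_self_charpoly, mul_zero]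
  -- q(P) is a unit
  have hunit : IsUnit (aeval P q) := by
    by_contra hnu
    have h0 : (0 : ℂ) ∈ spectrum ℂ (aeval P q) := by
      rw [spectrum.mem_iff]
      simpa using hnu
    rw [spectrum.map_polynomial_aeval_of_nonempty P q (spec_nonempty hm P)] at h0
    obtain ⟨α, hαP, hαq⟩ := h0
    have hqα : q.eval α = 0 := hαq
    by_cases hα0 : α = 0
    · subst hα0
      have : q.eval 0 = 1 := by
        rw [hq, eval_finset_sum]
        rw [Finset.sum_eq_single m]
        · simp [← hdeg, M.charpoly_monic.coeff_natDegree]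
          exact M.charpoly_monic.leadingCoeff
        · intro j hj hjm
          have : 0 < m - j := by
            have := Finset.mem_range.mp hj; omega
          simp [zero_pow (by omega : m - j ≠ 0)]
        · intro h; exact absurd (Finset.self_mem_range_succ m) h
      rw [hqα] at this; exact one_ne_zero this.symm
    · -- α ≠ 0 : then α⁻¹ is a root of p, hence in σ(M)
      have hrel : q.eval α = α ^ m * p.eval α⁻¹ := by
        rw [hq, eval_finset_sum, eval_eq_sum_range' (n := m + 1) (by omega), Finset.mul_sum]
        refine Finset.sum_congr rfl fun j hj => ?_
        have hjm : j ≤ m := Nat.lt_succ_iff.mp (Finset.mem_range.mp hj)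
        rw [eval_mul, eval_pow, eval_C, eval_X, pow_sub₀ α hα0 hjm, inv_pow]
        ring
      have hproot : p.eval α⁻¹ = 0 := by
        have := hrel ▸ hqα
        rcases mul_eq_zero.mp this with h | h
        · exact absurd h (pow_ne_zero m hα0)
        · exact h
      have hβ : α⁻¹ ∈ spectrum ℂ M := by
        rw [spec_det]
        rw [← charpoly_eval_eq]
        exact hproot
      exact hspec α hαP α⁻¹ hβ (mul_inv_cancel₀ hα0)
  exact hunit.mul_left_cancel (by rw [key, mul_zero])

lemma spec_mulVecLin (M : Matrix (Fin m) (Fin m) ℂ) :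
    spectrum ℂ (M.mulVecLin) = spectrum ℂ M := by
  have : M.mulVecLin = Matrix.toLinAlgEquiv' M := rfl
  rw [this]
  exact AlgEquiv.spectrum_eq Matrix.toLinAlgEquiv' M

set_option maxHeartbeats 1000000 in
lemma V_isUnit {n : ℕ} (A B C U V T : Matrix (Fin n) (Fin n) ℂ)
    (hrf : (∀ μ ν : ℂ, (Aᴴ - μ • B).det = 0 → (Aᴴ - ν • B).det = 0 →
      μ * (starRingEnd ℂ ν) ≠ 1))
    (hB : IsUnit B)
    (hfull : Function.Injective
      (Matrix.of (Sum.elim (fun i => U i) (fun i => V i)) :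
        Matrix (Fin n ⊕ Fin n) (Fin n) ℂ).mulVecLin)
    (e1 : Aᴴ * V = B * V * T)
    (e2 : Bᴴ * U - Cᴴ * V = (A * U - C * V) * T)
    (hT : spectrum ℂ T = {lam : ℂ | (Aᴴ - lam • B).det = 0}) :
    IsUnit V := by
  have hBdet : B.det ≠ 0 := by
    intro h
    exact (by simpa [h] using (Matrix.isUnit_iff_isUnit_det B).mp hB : IsUnit (0:ℂ)).ne_zero rfl
  have hBinj : Function.Injective B.mulVec :=
    Matrix.mulVec_injective_iff_isUnit.mpr hB
  rw [← Matrix.mulVec_injective_iff_isUnit]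
  -- suppose V.mulVec not injective
  by_contra hVinj
  have hVdet : V.det = 0 := by
    by_contra h
    exact hVinj (Matrix.mulVec_injective_iff_isUnit.mpr
      ((Matrix.isUnit_iff_isUnit_det V).mpr (isUnit_iff_ne_zero.mpr h)))
  obtain ⟨x0, hx0ne, hx0⟩ := (Matrix.exists_mulVec_eq_zero_iff).mpr hVdet
  -- the kernel of V is T-invariant
  set K := LinearMap.ker V.mulVecLin with hK
  have hKmem : ∀ y, y ∈ K ↔ V.mulVec y = 0 := fun y => LinearMap.mem_ker
  have hinv : ∀ y ∈ K, T.mulVecLin y ∈ K := by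
    intro y hy
    rw [hKmem] at hy ⊢
    have h1 : (B * V * T).mulVec y = 0 := by
      rw [← e1, ← Matrix.mulVec_mulVec, hy, Matrix.mulVec_zero]
    have h2 : B.mulVec (V.mulVec (T.mulVec y)) = 0 := by
      rwa [← Matrix.mulVec_mulVec, ← Matrix.mulVec_mulVec] at h1
    have := hBinj (h2.trans (B.mulVec_zero).symm)
    simpa using this
  haveI : Nontrivial K := by
    refine nontrivial_of_ne ⟨x0, (hKmem x0).mpr hx0⟩ 0 ?_
    simp [Subtype.ext_iff, hx0ne]
  obtain ⟨μ, hμ⟩ := Module.End.exists_eigenvalue (T.mulVecLin.restrict hinv)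
  obtain ⟨v, hv⟩ := hμ.exists_hasEigenvector
  have hvK : (v : Fin n → ℂ) ∈ K := v.2
  have hvne : (v : Fin n → ℂ) ≠ 0 := fun h => hv.2 (Subtype.ext h)
  have hTv : T.mulVec (v : Fin n → ℂ) = μ • (v : Fin n → ℂ) := by
    have h := congrArg Subtype.val hv.apply_eq_smul
    rw [LinearMap.restrict_coe_apply] at h
    rw [← Matrix.mulVecLin_apply]
    exact h
  -- μ is in the spectrum of T
  have hμT : μ ∈ spectrum ℂ T := by
    rw [← spec_mulVecLin]
    rw [← Module.End.hasEigenvalue_iff_mem_spectrum]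
    exact Module.End.hasEigenvalue_of_hasEigenvector
      ⟨Module.End.mem_eigenspace_iff.mpr hTv, hvne⟩
  have hdet1 : (Aᴴ - μ • B).det = 0 := by rw [hT] at hμT; exact hμT
  -- U.mulVec v ≠ 0 by full column rank
  have hVv : V.mulVec (v : Fin n → ℂ) = 0 := (hKmem _).mp hvK
  have hUv : U.mulVec (v : Fin n → ℂ) ≠ 0 := by
    intro hU0
    apply hvne
    apply hfull
    rw [map_zero]
    funext i
    cases i with
    | inl i => simpa [Matrix.mulVecLin_apply, Matrix.mulVec] using congrFun hU0 i
    | inr i => simpa [Matrix.mulVecLin_apply, Matrix.mulVec] using congrFun hVv i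
  -- (Bᴴ - μ • A) kills U.mulVec v
  have hkill : (Bᴴ - μ • A).mulVec (U.mulVec (v : Fin n → ℂ)) = 0 := by
    have h1 := congrArg (fun M => M.mulVec (v : Fin n → ℂ)) e2
    simp only [Matrix.sub_mulVec, ← Matrix.mulVec_mulVec, hTv, Matrix.mulVec_smul, hVv,
      Matrix.mulVec_zero, smul_zero, sub_zero] at h1
    rw [Matrix.sub_mulVec, Matrix.smul_mulVec, h1, sub_self]
  have hdetBA : (Bᴴ - μ • A).det = 0 := by
    rw [← Matrix.exists_mulVec_eq_zero_iff]
    exact ⟨_, hUv, hkill⟩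
  -- conjugate: det (B - conj μ • Aᴴ) = 0
  have hdetc : (B - (starRingEnd ℂ μ) • Aᴴ).det = 0 := by
    have : (Bᴴ - μ • A)ᴴ = B - (starRingEnd ℂ μ) • Aᴴ := by
      rw [Matrix.conjTranspose_sub, Matrix.conjTranspose_conjTranspose,
        Matrix.conjTranspose_smul]
      rfl
    rw [← this, Matrix.det_conjTranspose, hdetBA, star_zero]
  have hμne : μ ≠ 0 := by
    intro h
    rw [h] at hdetc
    simp at hdetc
    exact hBdet hdetc
  have hcne : (starRingEnd ℂ μ) ≠ 0 := by simpa using hμne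
  set ν : ℂ := ((starRingEnd ℂ μ))⁻¹ with hν
  have hdet2 : (Aᴴ - ν • B).det = 0 := by
    have hfac : B - (starRingEnd ℂ μ) • Aᴴ = (-(starRingEnd ℂ μ)) • (Aᴴ - ν • B) := by
      rw [smul_sub, smul_smul, hν, neg_mul, mul_inv_cancel₀ hcne]
      simp [sub_eq_iff_eq_add]
    rw [hfac, Matrix.det_smul] at hdetc
    rcases mul_eq_zero.mp hdetc with h | h
    · exact absurd h (pow_ne_zero _ (neg_ne_zero.mpr hcne))
    · exact h
  refine hrf μ ν hdet1 hdet2 ?_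
  rw [hν, map_inv₀, Complex.conj_conj, mul_inv_cancel₀ hμne]

set_option maxHeartbeats 1000000 in
theorem starSylvester_aux
    (n : ℕ) (A B C : Matrix (Fin n) (Fin n) ℂ)
    (hrf : (∀ μ ν : ℂ, (Aᴴ - μ • B).det = 0 → (Aᴴ - ν • B).det = 0 →
      μ * (starRingEnd ℂ ν) ≠ 1))
    (hB : IsUnit B)
    (U V T : Matrix (Fin n) (Fin n) ℂ)
    (hfull : Function.Injective
      (Matrix.of (Sum.elim (fun i => U i) (fun i => V i)) :
        Matrix (Fin n ⊕ Fin n) (Fin n) ℂ).mulVecLin)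
    (hdef : (fromBlocks 0 B A (-C))ᴴ * Matrix.of (Sum.elim (fun i => U i) (fun i => V i))
      = (fromBlocks 0 B A (-C)) * Matrix.of (Sum.elim (fun i => U i) (fun i => V i)) * T)
    (hT : spectrum ℂ T = {lam : ℂ | (Aᴴ - lam • B).det = 0}) :
    IsUnit V ∧ A * (U * V⁻¹) + (U * V⁻¹)ᴴ * B = C ∧
      ∀ X' : Matrix (Fin n) (Fin n) ℂ, A * X' + X'ᴴ * B = C → X' = U * V⁻¹ := by
  -- extract block equations
  have hW : (Matrix.of (Sum.elim (fun i => U i) (fun i => V i)) :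
      Matrix (Fin n ⊕ Fin n) (Fin n) ℂ) = fromRows U V := rfl
  rw [hW, Matrix.fromBlocks_conjTranspose, Matrix.fromBlocks_mul_fromRows,
    Matrix.fromBlocks_mul_fromRows, Matrix.fromRows_mul] at hdef
  obtain ⟨e1raw, e2raw⟩ := (Matrix.fromRows_ext_iff _ _ _ _).mp hdef
  have e1 : Aᴴ * V = B * V * T := by
    simpa using e1raw
  have e2 : Bᴴ * U - Cᴴ * V = (A * U - C * V) * T := by
    have := e2raw
    simp only [Matrix.conjTranspose_neg, Matrix.neg_mul, ← sub_eq_add_neg] at this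
    exact this
  -- V is invertible
  have hV : IsUnit V := V_isUnit A B C U V T hrf hB hfull e1 e2 hT
  refine ⟨hV, ?_⟩
  -- basic cancellation facts
  have hBd : IsUnit B.det := (Matrix.isUnit_iff_isUnit_det B).mp hB
  have hVd : IsUnit V.det := (Matrix.isUnit_iff_isUnit_det V).mp hV
  have hBB : B * B⁻¹ = 1 := Matrix.mul_nonsing_inv B hBd
  have hB'B : B⁻¹ * B = 1 := Matrix.nonsing_inv_mul B hBd
  have hVV : V * V⁻¹ = 1 := Matrix.mul_nonsing_inv V hVd
  have hV'V : V⁻¹ * V = 1 := Matrix.nonsing_inv_mul V hVd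
  have hc1 : ∀ Y : Matrix (Fin n) (Fin n) ℂ, B * (B⁻¹ * Y) = Y := by
    intro Y; rw [← mul_assoc, hBB, one_mul]
  have hc2 : ∀ Y : Matrix (Fin n) (Fin n) ℂ, B⁻¹ * (B * Y) = Y := by
    intro Y; rw [← mul_assoc, hB'B, one_mul]
  have hc3 : ∀ Y : Matrix (Fin n) (Fin n) ℂ, V * (V⁻¹ * Y) = Y := by
    intro Y; rw [← mul_assoc, hVV, one_mul]
  have hc4 : ∀ Y : Matrix (Fin n) (Fin n) ℂ, V⁻¹ * (V * Y) = Y := by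
    intro Y; rw [← mul_assoc, hV'V, one_mul]
  set X : Matrix (Fin n) (Fin n) ℂ := U * V⁻¹ with hX
  clear_value X
  set M : Matrix (Fin n) (Fin n) ℂ := B⁻¹ * Aᴴ with hM
  clear_value M
  -- spectra inclusions
  have hdetinv : (B⁻¹).det ≠ 0 := by
    rw [Matrix.det_nonsing_inv, Ring.inverse_eq_inv']
    exact inv_ne_zero hBd.ne_zero
  have hσM : ∀ β ∈ spectrum ℂ M, (Aᴴ - β • B).det = 0 := by
    intro β hβ
    rw [spec_det] at hβ
    have hfac : β • (1 : Matrix (Fin n) (Fin n) ℂ) - M = B⁻¹ * (β • B - Aᴴ) := by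
      rw [hM, Matrix.mul_sub, Matrix.mul_smul, hB'B]
    rw [hfac, Matrix.det_mul] at hβ
    have h2 : (β • B - Aᴴ).det = 0 := by
      rcases mul_eq_zero.mp hβ with h | h
      · exact absurd h hdetinv
      · exact h
    have h3 : β • B - Aᴴ = -(Aᴴ - β • B) := by abel
    rw [h3, Matrix.det_neg] at h2
    rcases mul_eq_zero.mp h2 with h | h
    · exact absurd h (pow_ne_zero _ (by norm_num))
    · exact h
  have hσN : ∀ β ∈ spectrum ℂ (Aᴴ * B⁻¹), (Aᴴ - β • B).det = 0 := by
    intro β hβ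
    rw [spec_det] at hβ
    have hfac : β • (1 : Matrix (Fin n) (Fin n) ℂ) - Aᴴ * B⁻¹ = (β • B - Aᴴ) * B⁻¹ := by
      rw [Matrix.sub_mul, Matrix.smul_mul, hBB]
    rw [hfac, Matrix.det_mul] at hβ
    have h2 : (β • B - Aᴴ).det = 0 := by
      rcases mul_eq_zero.mp hβ with h | h
      · exact h
      · exact absurd h hdetinv
    have h3 : β • B - Aᴴ = -(Aᴴ - β • B) := by abel
    rw [h3, Matrix.det_neg] at h2
    rcases mul_eq_zero.mp h2 with h | h
    · exact absurd h (pow_ne_zero _ (by norm_num))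
    · exact h
  have hconj : ∀ (N : Matrix (Fin n) (Fin n) ℂ) (α : ℂ), α ∈ spectrum ℂ Nᴴ →
      (starRingEnd ℂ α) ∈ spectrum ℂ N := by
    intro N α hα
    rw [spec_det] at hα ⊢
    have hfac : (α • (1 : Matrix (Fin n) (Fin n) ℂ) - Nᴴ)ᴴ
        = (starRingEnd ℂ α) • 1 - N := by
      rw [Matrix.conjTranspose_sub, Matrix.conjTranspose_smul,
        Matrix.conjTranspose_one, Matrix.conjTranspose_conjTranspose]
      rfl
    rw [← hfac, Matrix.det_conjTranspose, hα, star_zero]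
  -- the key residual equation
  have hXe : Bᴴ * X - Cᴴ = (A * X - C) * M := by
    have h := congrArg (fun Y => Y * V⁻¹) e2
    have hTV : T * V⁻¹ = V⁻¹ * M := by
      have h1 : V * T = B⁻¹ * (Aᴴ * V) := by
        rw [e1, mul_assoc, hc2]
      calc T * V⁻¹ = V⁻¹ * (V * T) * V⁻¹ := by rw [hc4]
      _ = V⁻¹ * (B⁻¹ * (Aᴴ * V)) * V⁻¹ := by rw [h1]
      _ = V⁻¹ * M := by
          rw [hM]
          simp only [mul_assoc, hVV, mul_one]
    calc Bᴴ * X - Cᴴ = (Bᴴ * U - Cᴴ * V) * V⁻¹ := by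
          rw [Matrix.sub_mul, hX, mul_assoc, mul_assoc, hVV, mul_one]
    _ = (A * U - C * V) * (T * V⁻¹) := by rw [e2, mul_assoc]
    _ = ((A * U - C * V) * V⁻¹) * M := by rw [hTV, ← mul_assoc]
    _ = (A * X - C) * M := by
          rw [Matrix.sub_mul, hX, mul_assoc, mul_assoc, hVV, mul_one, ← mul_assoc]
  set R : Matrix (Fin n) (Fin n) ℂ := A * X + Xᴴ * B - C with hRdef
  clear_value R
  have hR : Rᴴ = R * M := by
    have hlhs : Rᴴ = Xᴴ * Aᴴ + (Bᴴ * X - Cᴴ) := by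
      rw [hRdef, Matrix.conjTranspose_sub, Matrix.conjTranspose_add,
        Matrix.conjTranspose_mul, Matrix.conjTranspose_mul,
        Matrix.conjTranspose_conjTranspose]
      abel
    have hrhs : R * M = Xᴴ * Aᴴ + (A * X - C) * M := by
      rw [hRdef]
      have : A * X + Xᴴ * B - C = (Xᴴ * B) + (A * X - C) := by abel
      rw [this, Matrix.add_mul, hM]
      congr 1
      rw [mul_assoc, hc1]
    rw [hlhs, hrhs, hXe]
  have hRM : R = Mᴴ * R * M := by
    conv_lhs => rw [← Matrix.conjTranspose_conjTranspose R, hR]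
    rw [Matrix.conjTranspose_mul, hR, ← mul_assoc]
  -- dispose of the trivial case n = 0
  rcases Nat.eq_zero_or_pos n with hn | hn
  · subst hn
    exact ⟨Subsingleton.elim _ _, fun X' _ => Subsingleton.elim _ _⟩
  -- Stein conditions
  have hsteinMM : ∀ α ∈ spectrum ℂ Mᴴ, ∀ β ∈ spectrum ℂ M, α * β ≠ 1 := by
    intro α hα β hβ h1
    have hαS : (Aᴴ - (starRingEnd ℂ α) • B).det = 0 := hσM _ (hconj M α hα)
    have hβS : (Aᴴ - β • B).det = 0 := hσM _ hβ
    exact hrf β (starRingEnd ℂ α) hβS hαS (by rw [Complex.conj_conj, mul_comm]; exact h1)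
  have hR0 : R = 0 := stein_zero hn Mᴴ M R hsteinMM hRM
  have hXsol : A * X + Xᴴ * B = C := by
    have := hR0
    rw [hRdef, sub_eq_zero] at this
    exact this
  refine ⟨hXsol, ?_⟩
  -- uniqueness
  intro X' hX'
  set D : Matrix (Fin n) (Fin n) ℂ := X' - X with hDdef
  clear_value D
  have hD : A * D + Dᴴ * B = 0 := by
    rw [hDdef, Matrix.mul_sub, Matrix.conjTranspose_sub, Matrix.sub_mul]
    rw [show A * X' - A * X + (X'ᴴ * B - Xᴴ * B)
        = (A * X' + X'ᴴ * B) - (A * X + Xᴴ * B) by abel, hX', hXsol, sub_self]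
  have hD1 : Dᴴ = -(A * D) * B⁻¹ := by
    have h1 : Dᴴ * B = -(A * D) := by
      have := eq_neg_of_add_eq_zero_right hD
      exact this
    calc Dᴴ = Dᴴ * (B * B⁻¹) := by rw [hBB, mul_one]
    _ = (Dᴴ * B) * B⁻¹ := by rw [mul_assoc]
    _ = -(A * D) * B⁻¹ := by rw [h1]
  have hD2 : D = (Aᴴ * B⁻¹)ᴴ * D * M := by
    calc D = ((-(A * D)) * B⁻¹)ᴴ := by rw [← hD1, Matrix.conjTranspose_conjTranspose]
    _ = (B⁻¹)ᴴ * (-(A * D))ᴴ := by rw [Matrix.conjTranspose_mul]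
    _ = (B⁻¹)ᴴ * -(Dᴴ * Aᴴ) := by rw [Matrix.conjTranspose_neg, Matrix.conjTranspose_mul]
    _ = (B⁻¹)ᴴ * -((-(A * D) * B⁻¹) * Aᴴ) := by rw [hD1]
    _ = (Aᴴ * B⁻¹)ᴴ * D * M := by
        rw [Matrix.conjTranspose_mul, Matrix.conjTranspose_conjTranspose, hM]
        simp only [Matrix.neg_mul, Matrix.mul_neg, neg_neg, mul_assoc]
  have hsteinNM : ∀ α ∈ spectrum ℂ (Aᴴ * B⁻¹)ᴴ, ∀ β ∈ spectrum ℂ M, α * β ≠ 1 := by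
    intro α hα β hβ h1
    have hαS : (Aᴴ - (starRingEnd ℂ α) • B).det = 0 := hσN _ (hconj (Aᴴ * B⁻¹) α hα)
    have hβS : (Aᴴ - β • B).det = 0 := hσM _ hβ
    exact hrf β (starRingEnd ℂ α) hβS hαS (by rw [Complex.conj_conj, mul_comm]; exact h1)
  have hD0 : D = 0 := stein_zero hn ((Aᴴ * B⁻¹)ᴴ) M D hsteinNM hD2
  have := hD0
  rw [hDdef, sub_eq_zero] at this
  exact this

end Aux

/-- For `Z = [[0, B],[A, -C]]` with `σ(Aᴴ - λB)` ⋆-reciprocal free and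
`B` invertible, if `Zᴴ [U; V] = Z [U; V] T` with `[U; V]` of full column rank and
`σ(T) = σ(Aᴴ - λB)`, then `V` is invertible and `X = U V⁻¹` is the unique solution
of `A X + Xᴴ B = C`. -/
theorem starSylvester_deflating_solution
    (n : ℕ) (A B C : Matrix (Fin n) (Fin n) ℂ)
    (hrf : StarReciprocalFree A B) (hB : IsUnit B)
    (U V T : Matrix (Fin n) (Fin n) ℂ)
    (hfull : Function.Injective
      (Matrix.of (Sum.elim (fun i => U i) (fun i => V i)) :
        Matrix (Fin n ⊕ Fin n) (Fin n) ℂ).mulVecLin)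
    (hdef : (fromBlocks 0 B A (-C))ᴴ * Matrix.of (Sum.elim (fun i => U i) (fun i => V i))
      = (fromBlocks 0 B A (-C)) * Matrix.of (Sum.elim (fun i => U i) (fun i => V i)) * T)
    (hT : spectrum ℂ T = {lam : ℂ | (Aᴴ - lam • B).det = 0}) :
    IsUnit V ∧ A * (U * V⁻¹) + (U * V⁻¹)ᴴ * B = C ∧
      ∀ X' : Matrix (Fin n) (Fin n) ℂ, A * X' + X'ᴴ * B = C → X' = U * V⁻¹ :=
  starSylvester_aux n A B C hrf.1 hB U V T hfull hdef hT
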